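/- Let 0 < T⁻ ≤ 1 ≤ T⁺ with T⁺ - 1 - ln T⁺ = T⁻ - 1 - ln T⁻. For μ > 0, t ≥ 0 define Λ(T, t) = 1 + (T - 1)·exp(-2μt) and D(T, t) = Λ(T,t) - 1 - ln Λ(T,t). Then D(T⁺, t) ≥ D(T⁻, t) for all t ≥ 0. -/

import Mathlib

noncomputable def Nfun (x : ℝ) : ℝ := x^2/(1+x) - 2*x + 2*Real.log (1+x)
noncomputable def rfun (x : ℝ) : ℝ := (x - Real.log (1+x))/x^2

lemma hasDerivAt_Nfun {x : ℝ} (hx : -1 < x) :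
    HasDerivAt Nfun (-(x^2)/(1+x)^2) x := by
  have h1 : (1:ℝ) + x ≠ 0 := by linarith
  have h2 : HasDerivAt (fun x : ℝ => x^2/(1+x)) ((2*x^1*(1+x) - x^2*1)/(1+x)^2) x :=
    (hasDerivAt_pow 2 x).div ((hasDerivAt_id' x).const_add 1) h1
  have h3 : HasDerivAt (fun x : ℝ => Real.log (1+x)) (1/(1+x)) x := by
    have := (Real.hasDerivAt_log h1).comp x ((hasDerivAt_id' x).const_add 1)
    exact this.congr_deriv (by simp)
  have h4 := (h2.sub ((hasDerivAt_id' x).const_mul 2)).add (h3.const_mul 2)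
  have : Nfun = fun x : ℝ => x^2/(1+x) - 2*x + 2*Real.log (1+x) := rfl
  rw [this]
  refine h4.congr_deriv ?_
  field_simp
  ring

lemma Nfun_antitoneOn : AntitoneOn Nfun (Set.Ioi (-1 : ℝ)) := by
  apply antitoneOn_of_deriv_nonpos (convex_Ioi _)
  · intro x hx
    exact (hasDerivAt_Nfun hx).differentiableAt.continuousAt.continuousWithinAt
  · rw [interior_Ioi]
    intro x hx
    exact (hasDerivAt_Nfun hx).differentiableAt.differentiableWithinAt
  · rw [interior_Ioi]
    intro x hx
    rw [(hasDerivAt_Nfun hx).deriv]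
    have : (0:ℝ) < (1+x)^2 := by nlinarith [Set.mem_Ioi.mp hx]
    apply div_nonpos_of_nonpos_of_nonneg <;> nlinarith [sq_nonneg x]

lemma Nfun_zero : Nfun 0 = 0 := by simp [Nfun]

lemma hasDerivAt_rfun {x : ℝ} (hx : -1 < x) (hx0 : x ≠ 0) :
    HasDerivAt rfun (Nfun x / x^3) x := by
  have h1 : (1:ℝ) + x ≠ 0 := by linarith
  have h3 : HasDerivAt (fun x : ℝ => x - Real.log (1+x)) (1 - 1/(1+x)) x := by
    have := (Real.hasDerivAt_log h1).comp x ((hasDerivAt_id' x).const_add 1)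
    exact ((hasDerivAt_id' x).sub this).congr_deriv (by simp)
  have h4 := h3.div (hasDerivAt_pow 2 x) (pow_ne_zero 2 hx0)
  have : rfun = fun x : ℝ => (x - Real.log (1+x))/x^2 := rfl
  rw [this]
  refine h4.congr_deriv ?_
  rw [Nfun.eq_def]
  field_simp
  ring

lemma rfun_antitoneOn_pos : AntitoneOn rfun (Set.Ioi (0 : ℝ)) := by
  apply antitoneOn_of_deriv_nonpos (convex_Ioi _)
  · intro x hx
    have hx' : (0:ℝ) < x := hx
    exact (hasDerivAt_rfun (by linarith) (ne_of_gt hx')).differentiableAt.continuousAt.continuousWithinAt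
  · rw [interior_Ioi]
    intro x hx
    have hx' : (0:ℝ) < x := hx
    exact (hasDerivAt_rfun (by linarith) (ne_of_gt hx')).differentiableAt.differentiableWithinAt
  · rw [interior_Ioi]
    intro x hx
    have hx' : (0:ℝ) < x := hx
    rw [(hasDerivAt_rfun (by linarith) (ne_of_gt hx')).deriv]
    have hN : Nfun x ≤ 0 := by
      have := Nfun_antitoneOn (Set.mem_Ioi.mpr (by norm_num : (-1:ℝ) < 0))
        (Set.mem_Ioi.mpr (by linarith : (-1:ℝ) < x)) (le_of_lt hx')
      rwa [Nfun_zero] at this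
    exact div_nonpos_of_nonpos_of_nonneg hN (by positivity)

lemma rfun_antitoneOn_neg : AntitoneOn rfun (Set.Ioo (-1 : ℝ) 0) := by
  apply antitoneOn_of_deriv_nonpos (convex_Ioo _ _)
  · intro x hx
    exact (hasDerivAt_rfun hx.1 (ne_of_lt hx.2)).differentiableAt.continuousAt.continuousWithinAt
  · rw [interior_Ioo]
    intro x hx
    exact (hasDerivAt_rfun hx.1 (ne_of_lt hx.2)).differentiableAt.differentiableWithinAt
  · rw [interior_Ioo]
    intro x hx
    rw [(hasDerivAt_rfun hx.1 (ne_of_lt hx.2)).deriv]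
    have hN : 0 ≤ Nfun x := by
      have := Nfun_antitoneOn (Set.mem_Ioi.mpr hx.1)
        (Set.mem_Ioi.mpr (by norm_num : (-1:ℝ) < 0)) (le_of_lt hx.2)
      rwa [Nfun_zero] at this
    have hx3 : x^3 < 0 := by
      have h2 : 0 < x^2 := pow_pos (neg_pos.mpr hx.2) 2 |>.trans_eq (by ring)
      nlinarith [hx.2]
    exact div_nonpos_of_nonneg_of_nonpos hN (le_of_lt hx3)

lemma phi_scale_pos {a s : ℝ} (ha : 0 ≤ a) (hs0 : 0 < s) (hs1 : s ≤ 1) :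
    s^2 * (a - Real.log (1+a)) ≤ a*s - Real.log (1+a*s) := by
  rcases eq_or_lt_of_le ha with h | h
  · simp [← h]
  · have has : 0 < a*s := mul_pos h hs0
    have hle : a*s ≤ a := by nlinarith
    have := rfun_antitoneOn_pos (Set.mem_Ioi.mpr has) (Set.mem_Ioi.mpr h) hle
    rw [rfun, rfun, div_le_div_iff₀ (by positivity) (by positivity)] at this
    nlinarith [sq_nonneg a, mul_pos h h]

lemma phi_scale_neg {a s : ℝ} (ha1 : -1 < a) (ha : a ≤ 0) (hs0 : 0 < s) (hs1 : s ≤ 1) :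
    a*s - Real.log (1+a*s) ≤ s^2 * (a - Real.log (1+a)) := by
  rcases eq_or_lt_of_le ha with h | h
  · simp [h]
  · have has : a*s < 0 := mul_neg_of_neg_of_pos h hs0
    have hle : a ≤ a*s := by nlinarith
    have has1 : -1 < a*s := lt_of_lt_of_le ha1 hle
    have hsq1 : (0:ℝ) < a^2 := by nlinarith [mul_pos_of_neg_of_neg h h]
    have hsq2 : (0:ℝ) < (a*s)^2 := by nlinarith [mul_pos_of_neg_of_neg has has]
    have := rfun_antitoneOn_neg (Set.mem_Ioo.mpr ⟨ha1, h⟩) (Set.mem_Ioo.mpr ⟨has1, has⟩) hle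
    rw [rfun, rfun, div_le_div_iff₀ hsq2 hsq1] at this
    nlinarith [mul_pos (mul_pos_of_neg_of_neg h h) (mul_pos hs0 hs0)]

theorem perMode_uphill_faster (Tm Tp μ : ℝ) (hTm : 0 < Tm) (hTm1 : Tm ≤ 1)
    (hTp1 : 1 ≤ Tp) (hμ : 0 < μ)
    (heq : Tp - 1 - Real.log Tp = Tm - 1 - Real.log Tm) :
    ∀ t : ℝ, 0 ≤ t →
      (1 + (Tp - 1) * Real.exp (-2 * μ * t)) - 1 -
          Real.log (1 + (Tp - 1) * Real.exp (-2 * μ * t)) ≥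
        (1 + (Tm - 1) * Real.exp (-2 * μ * t)) - 1 -
          Real.log (1 + (Tm - 1) * Real.exp (-2 * μ * t)) := by
  intro t ht
  set s := Real.exp (-2 * μ * t) with hs
  have hs0 : 0 < s := Real.exp_pos _
  have hs1 : s ≤ 1 := Real.exp_le_one_iff.mpr (by nlinarith)
  have key1 : s^2 * (Tp - 1 - Real.log Tp) ≤ (Tp-1)*s - Real.log (1+(Tp-1)*s) := by
    have := phi_scale_pos (a := Tp - 1) (by linarith) hs0 hs1
    have h2 : 1 + (Tp - 1) = Tp := by ring
    rwa [h2] at this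
  have key2 : (Tm-1)*s - Real.log (1+(Tm-1)*s) ≤ s^2 * (Tm - 1 - Real.log Tm) := by
    have := phi_scale_neg (a := Tm - 1) (by linarith) (by linarith) hs0 hs1
    have h2 : 1 + (Tm - 1) = Tm := by ring
    rwa [h2] at this
  rw [heq] at key1
  linarith
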